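/- arXiv:2604.02146 — 2 statements merged into one kernel-verified Lean document; each statement's English description precedes it below -/
import Mathlib

section
/- Every invertible n×n matrix M over a field K admits a Bruhat decomposition: there exist upper triangular n×n matrices U₁ and U₂ over K and a permutation matrix P such that M = U₁ · P · U₂. -/
/-- An `n × n` matrix is upper triangular if all entries below the diagonal vanish. -/
def IsUpperTriangular {n : ℕ} {K : Type*} [Field K]
    (U : Matrix (Fin n) (Fin n) K) : Prop :=
  ∀ i j : Fin n, j < i → U i j = 0

/-- The permutation matrix associated to a permutation `σ` of `{1,…,n}`:
its `(i,j)` entry is `1` iff `σ i = j`. -/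
def permMatrix {n : ℕ} (K : Type*) [Field K] (σ : Equiv.Perm (Fin n)) :
    Matrix (Fin n) (Fin n) K :=
  Matrix.of fun i j => if σ i = j then 1 else 0

open Matrix hiding IsUpperTriangular
open Finset

section Aux

variable {n : ℕ} {K : Type*} [Field K]

lemma IsUpperTriangular.blockTriangular {U : Matrix (Fin n) (Fin n) K}
    (h : IsUpperTriangular U) : U.BlockTriangular id := fun i j hij => h i j hij

lemma Matrix.BlockTriangular.isUpperTriangular {U : Matrix (Fin n) (Fin n) K}
    (h : U.BlockTriangular id) : IsUpperTriangular U := fun i j hij => h hij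

lemma permMatrix_mul_apply (σ : Equiv.Perm (Fin n)) (A : Matrix (Fin n) (Fin n) K)
    (x y : Fin n) : (permMatrix K σ * A) x y = A (σ x) y := by
  rw [Matrix.mul_apply]
  rw [Fintype.sum_eq_single (σ x) (fun b hb => by
    simp [permMatrix, Ne.symm hb])]
  simp [permMatrix]

/-- Bordering an `n × n` matrix: insert a new row and column at position `i`,
with a single entry `c` on the diagonal there. -/
def border (i : Fin (n + 1)) (c : K) (U : Matrix (Fin n) (Fin n) K) :
    Matrix (Fin (n + 1)) (Fin (n + 1)) K :=
  Matrix.of fun x y =>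
    match finSuccEquiv' i x, finSuccEquiv' i y with
    | none, none => c
    | some a, some b => U a b
    | _, _ => 0

@[simp] lemma border_pivot_pivot (i : Fin (n + 1)) (c : K) (U : Matrix (Fin n) (Fin n) K) :
    border i c U i i = c := by simp [border, finSuccEquiv'_at]

@[simp] lemma border_pivot_succAbove (i : Fin (n + 1)) (c : K) (U : Matrix (Fin n) (Fin n) K)
    (b : Fin n) : border i c U i (i.succAbove b) = 0 := by
  simp [border, finSuccEquiv'_at, finSuccEquiv'_succAbove]

@[simp] lemma border_succAbove_pivot (i : Fin (n + 1)) (c : K) (U : Matrix (Fin n) (Fin n) K)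
    (a : Fin n) : border i c U (i.succAbove a) i = 0 := by
  simp [border, finSuccEquiv'_at, finSuccEquiv'_succAbove]

@[simp] lemma border_succAbove_succAbove (i : Fin (n + 1)) (c : K)
    (U : Matrix (Fin n) (Fin n) K) (a b : Fin n) :
    border i c U (i.succAbove a) (i.succAbove b) = U a b := by
  simp [border, finSuccEquiv'_succAbove]

@[simp] lemma border_zero_succ (c : K) (U : Matrix (Fin n) (Fin n) K) (b : Fin n) :
    border (0 : Fin (n + 1)) c U 0 b.succ = 0 := by
  rw [← Fin.succAbove_zero]; exact border_pivot_succAbove 0 c U b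

@[simp] lemma border_succ_zero (c : K) (U : Matrix (Fin n) (Fin n) K) (a : Fin n) :
    border (0 : Fin (n + 1)) c U a.succ 0 = 0 := by
  rw [← Fin.succAbove_zero]; exact border_succAbove_pivot 0 c U a

@[simp] lemma border_succ_succ (c : K) (U : Matrix (Fin n) (Fin n) K) (a b : Fin n) :
    border (0 : Fin (n + 1)) c U a.succ b.succ = U a b := by
  rw [← Fin.succAbove_zero]; exact border_succAbove_succAbove 0 c U a b

lemma border_isUpperTriangular (i : Fin (n + 1)) (c : K) {U : Matrix (Fin n) (Fin n) K}
    (hU : IsUpperTriangular U) : IsUpperTriangular (border i c U) := by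
  intro x y hxy
  by_cases hx : x = i
  · subst hx
    have hy : y ≠ x := ne_of_lt hxy
    obtain ⟨b, rfl⟩ := Fin.exists_succAbove_eq hy
    simp
  · obtain ⟨a, rfl⟩ := Fin.exists_succAbove_eq hx
    by_cases hy : y = i
    · subst hy
      simp
    · obtain ⟨b, rfl⟩ := Fin.exists_succAbove_eq hy
      rw [border_succAbove_succAbove]
      exact hU a b (Fin.succAbove_lt_succAbove_iff.mp hxy)

end Aux

section Main

variable {K : Type*} [Field K]

theorem bruhat_aux : ∀ (n : ℕ) (M : Matrix (Fin n) (Fin n) K), IsUnit M →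
    ∃ (U₁ U₂ : Matrix (Fin n) (Fin n) K) (σ : Equiv.Perm (Fin n)),
      IsUpperTriangular U₁ ∧ IsUpperTriangular U₂ ∧
      M = U₁ * permMatrix K σ * U₂ := by
  intro n
  induction n with
  | zero =>
    intro M _
    exact ⟨1, 1, 1, (fun i => i.elim0), (fun i => i.elim0), Subsingleton.elim _ _⟩
  | succ n ih =>
    intro M hM
    classical
    have hdet : M.det ≠ 0 :=
      isUnit_iff_ne_zero.mp ((Matrix.isUnit_iff_isUnit_det M).mp hM)
    -- column 0 is nonzero
    have hcol : ∃ a, M a 0 ≠ 0 := by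
      by_contra h
      push_neg at h
      exact hdet (Matrix.det_eq_zero_of_column_eq_zero 0 h)
    -- pick the largest row index with nonzero entry in column 0
    set S : Finset (Fin (n + 1)) := Finset.univ.filter (fun a => M a 0 ≠ 0) with hS
    have hSne : S.Nonempty := by
      obtain ⟨a, ha⟩ := hcol
      exact ⟨a, by simp [hS, ha]⟩
    set i : Fin (n + 1) := S.max' hSne with hi
    have hic : M i 0 ≠ 0 := by
      have := S.max'_mem hSne
      simpa [hS] using this
    have hmax : ∀ a, i < a → M a 0 = 0 := by
      intro a ha
      by_contra h
      exact absurd (S.le_max' a (by simp [hS, h])) (not_le.mpr ha)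
    set c : K := M i 0 with hc
    -- Left elimination matrix
    set E : Matrix (Fin (n + 1)) (Fin (n + 1)) K :=
      Matrix.of (fun a b => if b = i then (if a = i then 0 else -M a 0 / c) else 0) with hE
    set L : Matrix (Fin (n + 1)) (Fin (n + 1)) K := 1 + E with hL
    have hLut : IsUpperTriangular L := by
      intro a b hba
      have hab : a ≠ b := (ne_of_lt hba).symm
      simp only [hL, Matrix.add_apply, Matrix.one_apply_ne hab, hE, Matrix.of_apply, zero_add]
      by_cases hbi : b = i
      · subst hbi
        have : M a 0 = 0 := hmax a hba
        simp [this]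
      · simp [hbi]
    have hLdiag : ∀ a, L a a = 1 := by
      intro a
      simp only [hL, Matrix.add_apply, Matrix.one_apply_eq, hE, Matrix.of_apply]
      by_cases h : a = i <;> simp [h]
    have hLdet : L.det = 1 := by
      rw [Matrix.det_of_upperTriangular hLut.blockTriangular]
      simp [Matrix.diag, hLdiag]
    set N₁ : Matrix (Fin (n + 1)) (Fin (n + 1)) K := L * M with hN₁
    have hN₁apply : ∀ a y, N₁ a y = M a y + (if a = i then 0 else -M a 0 / c) * M i y := by
      intro a y
      simp only [hN₁, hL, Matrix.add_mul, Matrix.one_mul, Matrix.add_apply]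
      congr 1
      rw [Matrix.mul_apply, Fintype.sum_eq_single i (fun b hb => by simp [hE, hb])]
      simp [hE]
    have hN₁i : ∀ y, N₁ i y = M i y := by intro y; simp [hN₁apply]
    have hN₁0 : ∀ a, a ≠ i → N₁ a 0 = 0 := by
      intro a ha
      rw [hN₁apply, if_neg ha, div_mul_cancel₀ _ hic]
      ring
    -- Right elimination matrix
    set F : Matrix (Fin (n + 1)) (Fin (n + 1)) K :=
      Matrix.of (fun z y => if z = 0 then (if y = 0 then 0 else -(N₁ i y) / c) else 0) with hF
    set R : Matrix (Fin (n + 1)) (Fin (n + 1)) K := 1 + F with hR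
    have hRut : IsUpperTriangular R := by
      intro z y hyz
      have hzy : z ≠ y := (ne_of_lt hyz).symm
      have hz0 : z ≠ 0 := by
        rintro rfl
        exact absurd hyz (Fin.not_lt_zero y)
      simp [hR, Matrix.one_apply_ne hzy, hF, hz0]
    have hRdiag : ∀ a, R a a = 1 := by
      intro a
      simp only [hR, Matrix.add_apply, Matrix.one_apply_eq, hF, Matrix.of_apply]
      by_cases h : a = 0 <;> simp [h]
    have hRdet : R.det = 1 := by
      rw [Matrix.det_of_upperTriangular hRut.blockTriangular]
      simp [Matrix.diag, hRdiag]
    set N₂ : Matrix (Fin (n + 1)) (Fin (n + 1)) K := N₁ * R with hN₂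
    have hN₂apply : ∀ x y, N₂ x y = N₁ x y + N₁ x 0 * (if y = 0 then 0 else -(N₁ i y) / c) := by
      intro x y
      simp only [hN₂, hR, Matrix.mul_add, Matrix.mul_one, Matrix.add_apply]
      congr 1
      rw [Matrix.mul_apply, Fintype.sum_eq_single (0 : Fin (n+1)) (fun b hb => by simp [hF, hb])]
      simp [hF]
    have hN₂col : ∀ x, N₂ x 0 = N₁ x 0 := by intro x; simp [hN₂apply]
    have hN₂i0 : N₂ i 0 = c := by rw [hN₂col, hN₁i]
    have hN₂a0 : ∀ a, a ≠ i → N₂ a 0 = 0 := fun a ha => by rw [hN₂col]; exact hN₁0 a ha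
    have hN₂row : ∀ y, y ≠ 0 → N₂ i y = 0 := by
      intro y hy
      rw [hN₂apply, if_neg hy, hN₁i 0, ← hc, neg_div, mul_neg, mul_div_assoc']
      rw [mul_comm c, mul_div_assoc, div_self hic, mul_one]
      ring
    -- determinant bookkeeping
    have hN₂det : N₂.det ≠ 0 := by
      simp only [hN₂, hN₁, Matrix.det_mul, hLdet, hRdet, one_mul, mul_one]
      exact hdet
    set M' : Matrix (Fin n) (Fin n) K := N₂.submatrix i.succAbove Fin.succ with hM'
    have hM'det : M'.det ≠ 0 := by
      have hexp := Matrix.det_succ_column_zero N₂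
      rw [Fintype.sum_eq_single i (fun b hb => by
        rw [hN₂a0 b hb]; ring)] at hexp
      rw [hN₂i0, ← hM'] at hexp
      intro h
      rw [h, mul_zero] at hexp
      exact hN₂det hexp
    have hM'unit : IsUnit M' := by
      rw [Matrix.isUnit_iff_isUnit_det]
      exact isUnit_iff_ne_zero.mpr hM'det
    obtain ⟨U₁, U₂, σ, hU₁, hU₂, hdec⟩ := ih M' hM'unit
    -- reassemble
    set V₁ : Matrix (Fin (n + 1)) (Fin (n + 1)) K := border i 1 U₁ with hV₁
    set V₂ : Matrix (Fin (n + 1)) (Fin (n + 1)) K := border 0 c U₂ with hV₂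
    set τ : Equiv.Perm (Fin (n + 1)) :=
      (finSuccEquiv' i).trans ((Equiv.optionCongr σ).trans (finSuccEquiv' 0).symm) with hτ
    have hτi : τ i = 0 := by
      simp [hτ, finSuccEquiv'_at]
    have hτs : ∀ b, τ (i.succAbove b) = (σ b).succ := by
      intro b
      simp [hτ, finSuccEquiv'_succAbove]
    have hsz : ((0 : Fin (n+1)).succAbove : Fin n → Fin (n+1)) = Fin.succ := Fin.succAbove_zero
    have hkey : N₂ = V₁ * permMatrix K τ * V₂ := by
      ext x y
      rw [Matrix.mul_assoc, Matrix.mul_apply]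
      have hterm : ∀ z, (permMatrix K τ * V₂) z y = V₂ (τ z) y := fun z =>
        permMatrix_mul_apply τ V₂ z y
      simp only [hterm]
      rw [Fin.sum_univ_succAbove (fun z => V₁ x z * V₂ (τ z) y) i]
      by_cases hx : x = i
      · subst hx
        simp only [hV₁, border_pivot_pivot, border_pivot_succAbove, zero_mul, one_mul,
          Finset.sum_const_zero, add_zero]
        rw [hτi]
        by_cases hy : y = 0
        · subst hy
          rw [hN₂i0]
          simp [hV₂]
        · obtain ⟨d, rfl⟩ := Fin.exists_succAbove_eq hy
          rw [hN₂row _ hy]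
          simp [hV₂]
      · obtain ⟨a, rfl⟩ := Fin.exists_succAbove_eq hx
        simp only [hV₁, border_succAbove_pivot, zero_mul, zero_add,
          border_succAbove_succAbove]
        by_cases hy : y = 0
        · subst hy
          have : ∀ b : Fin n, V₂ (τ (i.succAbove b)) 0 = 0 := by
            intro b
            rw [hτs b, ← hsz]
            simp [hV₂]
          simp only [this, mul_zero, Finset.sum_const_zero]
          exact hN₂a0 _ hx
        · obtain ⟨d, rfl⟩ := Fin.exists_succAbove_eq hy
          have : ∀ b : Fin n, V₂ (τ (i.succAbove b)) ((0:Fin (n+1)).succAbove d) = U₂ (σ b) d := by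
            intro b
            rw [hτs b, ← hsz]
            simp [hV₂]
          simp only [this]
          have : N₂ (i.succAbove a) ((0:Fin (n+1)).succAbove d) = M' a d := by
            rw [hM']
            simp [hsz]
          rw [this, hdec]
          rw [Matrix.mul_assoc, Matrix.mul_apply]
          refine Finset.sum_congr rfl fun b _ => ?_
          rw [permMatrix_mul_apply]
    -- invert L and R
    have hLunit : IsUnit L.det := by rw [hLdet]; exact isUnit_one
    have hRunit : IsUnit R.det := by rw [hRdet]; exact isUnit_one
    haveI : Invertible L := L.invertibleOfIsUnitDet hLunit
    haveI : Invertible R := R.invertibleOfIsUnitDet hRunit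
    have hLinv : IsUpperTriangular L⁻¹ :=
      (Matrix.blockTriangular_inv_of_blockTriangular hLut.blockTriangular).isUpperTriangular
    have hRinv : IsUpperTriangular R⁻¹ :=
      (Matrix.blockTriangular_inv_of_blockTriangular hRut.blockTriangular).isUpperTriangular
    refine ⟨L⁻¹ * V₁, V₂ * R⁻¹, τ, ?_, ?_, ?_⟩
    · exact (hLinv.blockTriangular.mul
        (border_isUpperTriangular i 1 hU₁).blockTriangular).isUpperTriangular
    · exact ((border_isUpperTriangular 0 c hU₂).blockTriangular.mul
        hRinv.blockTriangular).isUpperTriangular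
    · have hMN : L⁻¹ * N₂ * R⁻¹ = M := by
        rw [hN₂, hN₁]
        calc L⁻¹ * (L * M * R) * R⁻¹ = (L⁻¹ * L) * M * (R * R⁻¹) := by noncomm_ring
        _ = M := by
          rw [Matrix.nonsing_inv_mul _ hLunit, Matrix.mul_nonsing_inv _ hRunit,
            Matrix.one_mul, Matrix.mul_one]
      rw [← hMN, hkey]
      noncomm_ring

end Main

/-- Every invertible `n × n` matrix over a field admits a Bruhat decomposition
`M = U₁ * P * U₂` with `U₁, U₂` upper triangular and `P` a permutation matrix. -/
theorem bruhat_decomposition_exists {n : ℕ} {K : Type*} [Field K]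
    (M : Matrix (Fin n) (Fin n) K) (hM : IsUnit M) :
    ∃ (U₁ U₂ : Matrix (Fin n) (Fin n) K) (σ : Equiv.Perm (Fin n)),
      IsUpperTriangular U₁ ∧ IsUpperTriangular U₂ ∧
      M = U₁ * permMatrix K σ * U₂ := by
  exact bruhat_aux n M hM
end

section
/- Let M be an invertible lower triangular n×n matrix over a field K (i.e. M_{ij} = 0 whenever i < j). Suppose M = V₁ R V₂ is a Bruhat decomposition of M and −Mᵀ M⁻¹ = U₁ P U₂ is a Bruhat decomposition of the matrix −Mᵀ M⁻¹. Then R = P⁻¹ = Pᵀ. (This is the matrix-theoretic content of the fact that, for an algebra of finite global dimension with lower triangular Cartan matrix ω, the Coxeter permutation computed from the Coxeter matrix C = −ωᵀω⁻¹ coincides with the row-permutation of the permutation matrix in a Bruhat decomposition of ω.) -/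
/-- An `n × n` matrix is lower triangular if all entries above the diagonal vanish. -/
def IsLowerTriangular {n : ℕ} {K : Type*} [Field K]
    (L : Matrix (Fin n) (Fin n) K) : Prop :=
  ∀ i j : Fin n, i < j → L i j = 0

namespace BruhatAux

open Matrix hiding IsUpperTriangular

variable {n : ℕ} {K : Type*} [Field K]

lemma ut_iff (U : Matrix (Fin n) (Fin n) K) :
    IsUpperTriangular U ↔ U.BlockTriangular id :=
  ⟨fun h i j hij => h i j hij, fun h i j hij => h (show id j < id i from hij)⟩

lemma ut_mul {A B : Matrix (Fin n) (Fin n) K} (hA : IsUpperTriangular A)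
    (hB : IsUpperTriangular B) : IsUpperTriangular (A * B) := by
  rw [ut_iff] at *
  exact hA.mul hB

lemma ut_neg {A : Matrix (Fin n) (Fin n) K} (hA : IsUpperTriangular A) :
    IsUpperTriangular (-A) := fun i j hij => by
  simp [Matrix.neg_apply, hA i j hij]

lemma isUnit_inv {A : Matrix (Fin n) (Fin n) K} (h : IsUnit A) : IsUnit A⁻¹ := by
  have hd := (Matrix.isUnit_iff_isUnit_det A).1 h
  exact ⟨⟨A⁻¹, A, Matrix.nonsing_inv_mul A hd, Matrix.mul_nonsing_inv A hd⟩, rfl⟩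

lemma isUnit_transpose {A : Matrix (Fin n) (Fin n) K} (h : IsUnit A) :
    IsUnit A.transpose := by
  rw [Matrix.isUnit_iff_isUnit_det, Matrix.det_transpose,
    ← Matrix.isUnit_iff_isUnit_det]
  exact h

lemma ut_inv {A : Matrix (Fin n) (Fin n) K} (hA : IsUpperTriangular A)
    (hd : IsUnit A) : IsUpperTriangular A⁻¹ := by
  rw [ut_iff] at *
  have : Invertible A := hd.invertible
  exact Matrix.blockTriangular_inv_of_blockTriangular hA

lemma ut_diag_ne_zero {A : Matrix (Fin n) (Fin n) K} (hA : IsUpperTriangular A)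
    (hd : IsUnit A) (i : Fin n) : A i i ≠ 0 := by
  intro h0
  have hdet : A.det = ∏ i, A i i := Matrix.det_of_upperTriangular ((ut_iff A).1 hA)
  have hz : A.det = 0 := by
    rw [hdet]
    exact Finset.prod_eq_zero (Finset.mem_univ i) h0
  have := (Matrix.isUnit_iff_isUnit_det A).1 hd
  exact (hz ▸ this).ne_zero rfl

lemma mul_permMatrix_apply (A : Matrix (Fin n) (Fin n) K) (σ : Equiv.Perm (Fin n))
    (i j : Fin n) : (A * permMatrix K σ) i j = A i (σ.symm j) := by
  rw [Matrix.mul_apply]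
  rw [Finset.sum_eq_single (σ.symm j)]
  · simp [permMatrix]
  · intro k _ hk
    have : σ k ≠ j := fun h => hk (by simp [← h])
    simp [permMatrix, this]
  · simp

lemma permMatrix_mul_apply (σ : Equiv.Perm (Fin n)) (A : Matrix (Fin n) (Fin n) K)
    (i j : Fin n) : (permMatrix K σ * A) i j = A (σ i) j := by
  rw [Matrix.mul_apply]
  rw [Finset.sum_eq_single (σ i)]
  · simp [permMatrix]
  · intro k _ hk
    simp [permMatrix, Ne.symm hk]
  · simp

lemma permMatrix_mul (α β : Equiv.Perm (Fin n)) :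
    permMatrix K α * permMatrix K β = permMatrix K (β * α) := by
  ext i j
  rw [permMatrix_mul_apply]
  simp [permMatrix, Equiv.Perm.mul_apply]
  split_ifs <;> simp_all

lemma permMatrix_one : permMatrix K (1 : Equiv.Perm (Fin n)) = 1 := by
  ext i j
  simp [permMatrix, Matrix.one_apply]
  split_ifs <;> simp_all

lemma permMatrix_isUnit (σ : Equiv.Perm (Fin n)) : IsUnit (permMatrix K σ) := by
  have h1 : permMatrix K σ * permMatrix K σ⁻¹ = 1 := by
    rw [permMatrix_mul, inv_mul_cancel, permMatrix_one]
  have h2 : permMatrix K σ⁻¹ * permMatrix K σ = 1 := by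
    rw [permMatrix_mul, mul_inv_cancel, permMatrix_one]
  exact ⟨⟨permMatrix K σ, permMatrix K σ⁻¹, h1, h2⟩, rfl⟩

lemma permMatrix_inv (σ : Equiv.Perm (Fin n)) :
    (permMatrix K σ)⁻¹ = permMatrix K σ⁻¹ := by
  have h2 : permMatrix K σ⁻¹ * permMatrix K σ = 1 := by
    rw [permMatrix_mul, mul_inv_cancel, permMatrix_one]
  exact Matrix.inv_eq_left_inv h2

lemma permMatrix_transpose (σ : Equiv.Perm (Fin n)) :
    (permMatrix K σ).transpose = permMatrix K σ⁻¹ := by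
  ext i j
  simp only [Matrix.transpose_apply, permMatrix, Matrix.of_apply]
  congr 1
  simp only [eq_iff_iff]
  constructor
  · intro h; simp [← h]
  · intro h; simp [← h]

/-- Uniqueness of the permutation in a Bruhat decomposition. -/
lemma perm_eq_of_eq (U U' : Matrix (Fin n) (Fin n) K) (σ τ : Equiv.Perm (Fin n))
    (hU : IsUpperTriangular U) (hU' : IsUpperTriangular U')
    (hUu : IsUnit U) (hU'u : IsUnit U')
    (h : permMatrix K σ = U * permMatrix K τ * U') : σ = τ := by
  have hW : IsUpperTriangular U⁻¹ := ut_inv hU hUu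
  have hWu : IsUnit (U⁻¹) := isUnit_inv hUu
  have h2 : U⁻¹ * permMatrix K σ = permMatrix K τ * U' := by
    rw [h, ← Matrix.mul_assoc, ← Matrix.mul_assoc,
      Matrix.nonsing_inv_mul U ((Matrix.isUnit_iff_isUnit_det U).1 hUu), Matrix.one_mul]
  have key : ∀ i : Fin n, (τ i : ℕ) ≤ (σ i : ℕ) := by
    intro i
    have e := congrFun (congrFun h2 i) (σ i)
    rw [mul_permMatrix_apply, permMatrix_mul_apply, Equiv.symm_apply_apply] at e
    have hne : U' (τ i) (σ i) ≠ 0 := e ▸ ut_diag_ne_zero hW hWu i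
    by_contra hlt
    exact hne (hU' (τ i) (σ i) (by omega))
  have hsum : ∑ i, ((σ i : ℕ)) = ∑ i, ((τ i : ℕ)) := by
    rw [Equiv.sum_comp σ (fun i : Fin n => (i : ℕ)),
      Equiv.sum_comp τ (fun i : Fin n => (i : ℕ))]
  have heq : ∀ i ∈ Finset.univ, ((τ i : ℕ)) = ((σ i : ℕ)) :=
    (Finset.sum_eq_sum_iff_of_le (fun i _ => key i)).1 hsum.symm
  ext i
  exact ((heq i (Finset.mem_univ i)).symm : (σ i : ℕ) = τ i)

end BruhatAux

open BruhatAux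

/-- Let `M` be an invertible lower triangular matrix over a field `K`, with a Bruhat
decomposition `M = V₁ R V₂`, and let `-Mᵀ M⁻¹ = U₁ P U₂` be a Bruhat decomposition of
`-Mᵀ M⁻¹`.  Then `R = P⁻¹ = Pᵀ`. -/
theorem bruhat_perm_of_lowerTriangular_vs_coxeter {n : ℕ} {K : Type*} [Field K]
    (M V₁ V₂ U₁ U₂ : Matrix (Fin n) (Fin n) K) (ρ σ : Equiv.Perm (Fin n))
    (hM : IsUnit M) (hMlow : IsLowerTriangular M)
    (hV₁ : IsUpperTriangular V₁) (hV₂ : IsUpperTriangular V₂)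
    (hU₁ : IsUpperTriangular U₁) (hU₂ : IsUpperTriangular U₂)
    (hBruhatM : M = V₁ * permMatrix K ρ * V₂)
    (hBruhatC : -(M.transpose * M⁻¹) = U₁ * permMatrix K σ * U₂) :
    permMatrix K ρ = (permMatrix K σ)⁻¹ ∧
    permMatrix K ρ = (permMatrix K σ).transpose := by
  -- invertibility of the factors
  have hMdet : IsUnit M.det := (Matrix.isUnit_iff_isUnit_det M).1 hM
  have hdetfac : IsUnit (V₁.det * (permMatrix K ρ).det * V₂.det) := by
    rw [← Matrix.det_mul, ← Matrix.det_mul, ← hBruhatM]; exact hMdet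
  have hV₁u : IsUnit V₁ := (Matrix.isUnit_iff_isUnit_det V₁).2
    (isUnit_of_mul_isUnit_left (isUnit_of_mul_isUnit_left hdetfac))
  have hV₂u : IsUnit V₂ := (Matrix.isUnit_iff_isUnit_det V₂).2
    (isUnit_of_mul_isUnit_right hdetfac)
  have hCu : IsUnit (-(M.transpose * M⁻¹)) := by
    refine IsUnit.neg ((isUnit_transpose hM).mul (isUnit_inv hM))
  have hdetfacC : IsUnit (U₁.det * (permMatrix K σ).det * U₂.det) := by
    rw [← Matrix.det_mul, ← Matrix.det_mul, ← hBruhatC]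
    exact (Matrix.isUnit_iff_isUnit_det _).1 hCu
  have hU₁u : IsUnit U₁ := (Matrix.isUnit_iff_isUnit_det U₁).2
    (isUnit_of_mul_isUnit_left (isUnit_of_mul_isUnit_left hdetfacC))
  have hU₂u : IsUnit U₂ := (Matrix.isUnit_iff_isUnit_det U₂).2
    (isUnit_of_mul_isUnit_right hdetfacC)
  -- inverse of M
  have hMinv : M⁻¹ = V₂⁻¹ * permMatrix K ρ⁻¹ * V₁⁻¹ := by
    rw [hBruhatM, Matrix.mul_inv_rev, Matrix.mul_inv_rev, permMatrix_inv, Matrix.mul_assoc]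
  -- the matrix C as upper * perm * upper
  have hC2 : -(M.transpose * M⁻¹) =
      (-(M.transpose * V₂⁻¹)) * permMatrix K ρ⁻¹ * V₁⁻¹ := by
    rw [hMinv]
    noncomm_ring
  have hMTut : IsUpperTriangular M.transpose := fun i j hij => hMlow j i hij
  have hA : IsUpperTriangular (-(M.transpose * V₂⁻¹)) :=
    ut_neg (ut_mul hMTut (ut_inv hV₂ hV₂u))
  have hAu : IsUnit (-(M.transpose * V₂⁻¹)) :=
    ((isUnit_transpose hM).mul (isUnit_inv hV₂u)).neg
  have hEq : permMatrix K σ =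
      (U₁⁻¹ * -(M.transpose * V₂⁻¹)) * permMatrix K ρ⁻¹ * (V₁⁻¹ * U₂⁻¹) := by
    have h3 : U₁ * permMatrix K σ * U₂ =
        (-(M.transpose * V₂⁻¹)) * permMatrix K ρ⁻¹ * V₁⁻¹ := by
      rw [← hBruhatC, hC2]
    have hu1 : U₁⁻¹ * U₁ = 1 :=
      Matrix.nonsing_inv_mul U₁ ((Matrix.isUnit_iff_isUnit_det U₁).1 hU₁u)
    have hu2 : U₂ * U₂⁻¹ = 1 :=
      Matrix.mul_nonsing_inv U₂ ((Matrix.isUnit_iff_isUnit_det U₂).1 hU₂u)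
    calc permMatrix K σ
        = U₁⁻¹ * (U₁ * permMatrix K σ * U₂) * U₂⁻¹ := by
          rw [Matrix.mul_assoc U₁, ← Matrix.mul_assoc U₁⁻¹, hu1, Matrix.one_mul,
            Matrix.mul_assoc, hu2, Matrix.mul_one]
      _ = (U₁⁻¹ * -(M.transpose * V₂⁻¹)) * permMatrix K ρ⁻¹ * (V₁⁻¹ * U₂⁻¹) := by
          rw [h3]; noncomm_ring
  have hστ : σ = ρ⁻¹ :=
    perm_eq_of_eq _ _ σ ρ⁻¹
      (ut_mul (ut_inv hU₁ hU₁u) hA) (ut_mul (ut_inv hV₁ hV₁u) (ut_inv hU₂ hU₂u))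
      ((isUnit_inv hU₁u).mul hAu) ((isUnit_inv hV₁u).mul (isUnit_inv hU₂u)) hEq
  constructor
  · rw [permMatrix_inv, hστ, inv_inv]
  · rw [permMatrix_transpose, hστ, inv_inv]
end
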